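/- Let φ'(z) = Σ_{n∈ℤ} aₙ zⁿ and ψ'(z) = Σ_{m∈ℤ} b_m z^m be convergent Laurent series on an annulus {r < |z| < R}. If the function z ↦ conj(ψ'(z))·φ'(z) is radial (depends only on |z|), then aₙ · conj(b_m) = 0 for all n ≠ m. -/

import Mathlib

open Complex MeasureTheory intervalIntegral Real Filter


lemma integral_exp_int (j : ℤ) :
    ∫ y in (0:ℝ)..(2*Real.pi), Complex.exp (j * y * I) = if j = 0 then (2*Real.pi:ℂ) else 0 := by
  rcases eq_or_ne j 0 with h | h
  · simp [h]
  · have hc : (j:ℂ) * I ≠ 0 := mul_ne_zero (Int.cast_ne_zero.mpr h) I_ne_zero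
    have key := integral_exp_mul_complex (a := 0) (b := 2*Real.pi) hc
    rw [if_neg h]
    have h1 : ∀ y : ℝ, (j:ℂ) * y * I = (j * I) * y := by intro y; ring
    simp_rw [h1]
    rw [key]
    push_cast
    rw [show (j:ℂ) * I * (2*Real.pi) = j * (2 * Real.pi * I) by ring,
      Complex.exp_int_mul_two_pi_mul_I]
    simp

lemma fourier_ext (c : ℤ → ℂ) (hc : Summable fun m => ‖c m‖) (g : ℝ → ℂ)
    (hg : ∀ y : ℝ, HasSum (fun m : ℤ => c m * Complex.exp (m * y * I)) (g y)) (j : ℤ) :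
    ∫ y in (0:ℝ)..(2*Real.pi), g y * Complex.exp (-(j * y * I)) = 2 * Real.pi * c j := by
  have hpi : (0:ℝ) ≤ 2*Real.pi := by positivity
  set F : ℤ → ℝ → ℂ := fun m y => c m * Complex.exp ((m - j) * y * I) with hF
  have hgF : ∀ y : ℝ, HasSum (fun m => F m y) (g y * Complex.exp (-(j * y * I))) := by
    intro y
    have key := (hg y).mul_right (Complex.exp (-(j * y * I)))
    convert key using 2 with m
    show c m * Complex.exp ((↑m - ↑j) * ↑y * I) = _
    conv_rhs => rw [mul_assoc, ← Complex.exp_add]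
    congr 2
    ring
    rfl
  have hnorm : ∀ m (y : ℝ), ‖F m y‖ = ‖c m‖ := by
    intro m y
    show ‖c m * Complex.exp ((↑m - ↑j) * ↑y * I)‖ = _
    rw [norm_mul, Complex.norm_exp]
    have : (((m:ℂ) - j) * y * I).re = 0 := by simp
    rw [this, Real.exp_zero, mul_one]
  rw [intervalIntegral.integral_of_le hpi]
  have hmeas : ∀ m : ℤ, Integrable (F m) (volume.restrict (Set.Ioc 0 (2*Real.pi))) := by
    intro m
    apply Continuous.integrableOn_Ioc
    fun_prop
  have hsum : Summable fun m : ℤ => ∫ y in Set.Ioc 0 (2*Real.pi), ‖F m y‖ := by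
    have h4 : ∀ m : ℤ, ∫ y in Set.Ioc 0 (2*Real.pi), ‖F m y‖ = (2*Real.pi) * ‖c m‖ := by
      intro m
      simp_rw [hnorm m]
      rw [setIntegral_const]
      simp [Real.volume_Ioc, ENNReal.toReal_ofReal hpi, Real.pi_pos.le]
    simp_rw [h4]
    exact hc.mul_left _
  have key := integral_tsum_of_summable_integral_norm (μ := volume.restrict (Set.Ioc 0 (2*Real.pi))) hmeas hsum
  have h1 : ∀ y ∈ Set.Ioc (0:ℝ) (2*Real.pi), g y * Complex.exp (-(j * y * I)) = ∑' m, F m y := by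
    intro y _
    exact (hgF y).tsum_eq.symm
  rw [setIntegral_congr_fun measurableSet_Ioc h1, ← key]
  have h2 : ∀ m : ℤ, ∫ y in Set.Ioc 0 (2*Real.pi), F m y = if m = j then (2*Real.pi) * c j else 0 := by
    intro m
    show ∫ y in Set.Ioc 0 (2*Real.pi), c m * Complex.exp ((↑m - ↑j) * ↑y * I) = _
    rw [MeasureTheory.integral_const_mul, ← intervalIntegral.integral_of_le hpi]
    have h3 : ∀ y : ℝ, ((m:ℂ) - j) * y * I = ((m - j : ℤ):ℂ) * y * I := by intro y; push_cast; ring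
    simp_rw [h3, integral_exp_int]
    rcases eq_or_ne m j with h | h
    · rw [h]
      simp [mul_comm]
    · have h5 : m - j ≠ 0 := sub_ne_zero.mpr h
      simp [h5, h]
  simp_rw [h2]
  rw [tsum_eq_single j]
  · simp
  · intro m hm; simp [hm]


lemma exp_zpow (x : ℝ) (m : ℤ) : Real.exp x ^ m = Real.exp (m * x) := by
  rw [← Real.rpow_intCast, Real.rpow_def_of_pos (Real.exp_pos x), Real.log_exp, mul_comm]

lemma norm_term (c : ℂ) (m : ℤ) (s : ℂ) :
    ‖c * Complex.exp (m * s)‖ = ‖c‖ * Real.exp (m * s.re) := by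
  rw [norm_mul, Complex.norm_exp]
  congr 2
  simp [Complex.mul_re]

lemma laurent_zero (c : ℤ → ℂ) (r2 R2 : ℝ) (hr2 : 0 < r2) (hlt : r2 < R2)
    (hsum : ∀ t : ℝ, r2 < t → t < R2 → HasSum (fun m : ℤ => c m * (t:ℂ)^m) 0) :
    ∀ m : ℤ, c m = 0 := by
  set α := Real.log r2 with hα
  set β := Real.log R2 with hβ
  have hαβ : α < β := Real.log_lt_log hr2 hlt
  -- summability of norms at each x in (α, β)
  have hW : ∀ x : ℝ, α < x → x < β → Summable (fun m : ℤ => ‖c m‖ * Real.exp (m * x)) := by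
    intro x hx1 hx2
    have ht1 : r2 < Real.exp x := by
      rw [← Real.exp_log hr2]; exact Real.exp_lt_exp.mpr hx1
    have ht2 : Real.exp x < R2 := by
      rw [← Real.exp_log (hr2.trans hlt)]; exact Real.exp_lt_exp.mpr hx2
    have h1 := summable_norm_iff.mpr (hsum _ ht1 ht2).summable
    convert h1 using 2 with m
    rw [norm_mul, norm_zpow, Complex.norm_real, Real.norm_eq_abs,
      abs_of_pos (Real.exp_pos x), exp_zpow]
  -- the strip
  set U : Set ℂ := Complex.re ⁻¹' Set.Ioo α β with hU
  have hUopen : IsOpen U := isOpen_Ioo.preimage Complex.continuous_re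
  have hUconn : IsPreconnected U :=
    ((convex_Ioo α β).linear_preimage (Complex.reCLM : ℂ →ₗ[ℝ] ℝ)).isPreconnected
  -- the function
  set H : ℂ → ℂ := fun s => ∑' m : ℤ, c m * Complex.exp (m * s) with hH
  have hHsum : ∀ s : ℂ, s ∈ U → Summable (fun m : ℤ => c m * Complex.exp (m * s)) := by
    intro s hs
    apply Summable.of_norm
    simp_rw [norm_term]
    exact hW s.re hs.1 hs.2
  -- differentiability
  have hdiff : DifferentiableOn ℂ H U := by
    intro s hs
    obtain ⟨hs1, hs2⟩ := hs
    set x₁ := (α + s.re)/2 with hx₁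
    set x₂ := (s.re + β)/2 with hx₂
    have hαx₁ : α < x₁ := by rw [hx₁]; linarith
    have hx₁s : x₁ < s.re := by rw [hx₁]; linarith
    have hsx₂ : s.re < x₂ := by rw [hx₂]; linarith
    have hx₂β : x₂ < β := by rw [hx₂]; linarith
    set V : Set ℂ := Complex.re ⁻¹' Set.Ioo x₁ x₂ with hV
    have hVopen : IsOpen V := isOpen_Ioo.preimage Complex.continuous_re
    have hsV : s ∈ V := ⟨hx₁s, hsx₂⟩
    have hu : Summable (fun m : ℤ => ‖c m‖ * (Real.exp (m * x₁) + Real.exp (m * x₂))) := by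
      simpa [mul_add] using (hW x₁ hαx₁ (hx₁s.trans hs2)).add (hW x₂ (hαx₁.trans (hx₁s.trans hsx₂)) hx₂β)
    have hbound : ∀ (m : ℤ) (z : ℂ), z ∈ V →
        ‖c m * Complex.exp (m * z)‖ ≤ ‖c m‖ * (Real.exp (m * x₁) + Real.exp (m * x₂)) := by
      intro m z hz
      rw [norm_term]
      apply mul_le_mul_of_nonneg_left _ (norm_nonneg _)
      rcases le_total (0:ℝ) (m:ℝ) with hm | hm
      · have : (m:ℝ) * z.re ≤ m * x₂ := mul_le_mul_of_nonneg_left hz.2.le hm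
        calc Real.exp (m * z.re) ≤ Real.exp (m * x₂) := Real.exp_le_exp.mpr this
          _ ≤ _ := le_add_of_nonneg_left (Real.exp_pos _).le
      · have : (m:ℝ) * z.re ≤ m * x₁ := mul_le_mul_of_nonpos_left hz.1.le hm
        calc Real.exp (m * z.re) ≤ Real.exp (m * x₁) := Real.exp_le_exp.mpr this
          _ ≤ _ := le_add_of_nonneg_right (Real.exp_pos _).le
    have htu := tendstoUniformlyOn_tsum hu hbound
    have hdV : DifferentiableOn ℂ H V := by
      apply htu.tendstoLocallyUniformlyOn.differentiableOn _ hVopen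
      apply Filter.Eventually.of_forall
      intro t
      exact (Differentiable.fun_sum fun m _ =>
        (differentiable_const (c m)).mul ((differentiable_id.const_mul ((m:ℤ):ℂ)).cexp)).differentiableOn
    exact ((hdV s hsV).differentiableAt (hVopen.mem_nhds hsV)).differentiableWithinAt
  have hanal : AnalyticOnNhd ℂ H U := hdiff.analyticOnNhd hUopen
  -- H vanishes at real points of the strip
  have hzero_real : ∀ x : ℝ, α < x → x < β → H (x:ℂ) = 0 := by
    intro x hx1 hx2
    have ht1 : r2 < Real.exp x := by
      rw [← Real.exp_log hr2]; exact Real.exp_lt_exp.mpr hx1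
    have ht2 : Real.exp x < R2 := by
      rw [← Real.exp_log (hr2.trans hlt)]; exact Real.exp_lt_exp.mpr hx2
    have h0 : HasSum (fun m : ℤ => c m * Complex.exp (m * (x:ℂ))) 0 := by
      have h1 := hsum _ ht1 ht2
      convert h1 using 2 with m
      rw [Complex.ofReal_exp, ← Complex.exp_int_mul]
    exact h0.tsum_eq
  -- identity theorem
  set x₀ := (α + β)/2 with hx₀
  have hx₀1 : α < x₀ := by rw [hx₀]; linarith
  have hx₀2 : x₀ < β := by rw [hx₀]; linarith
  have hz₀U : ((x₀:ℝ):ℂ) ∈ U := by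
    simp only [hU, Set.mem_preimage, Complex.ofReal_re, Set.mem_Ioo]
    exact ⟨hx₀1, hx₀2⟩
  have hfreq : ∃ᶠ z in nhdsWithin ((x₀:ℝ):ℂ) {((x₀:ℝ):ℂ)}ᶜ, H z = 0 := by
    set d := (β - α)/4 with hd
    have hdpos : 0 < d := by rw [hd]; linarith
    set u : ℕ → ℝ := fun n => x₀ + d * (1/(n+1)) with hu
    have hulim : Tendsto (fun n : ℕ => ((u n : ℝ):ℂ)) atTop (nhdsWithin ((x₀:ℝ):ℂ) {((x₀:ℝ):ℂ)}ᶜ) := by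
      apply tendsto_nhdsWithin_of_tendsto_nhds_of_eventually_within
      · have h1 : Tendsto u atTop (nhds x₀) := by
          have := tendsto_one_div_add_atTop_nhds_zero_nat (𝕜 := ℝ)
          have h2 := this.const_mul d
          rw [mul_zero] at h2
          simpa [hu] using tendsto_const_nhds.add h2
        exact (Complex.continuous_ofReal.tendsto x₀).comp h1
      · apply Filter.Eventually.of_forall
        intro n
        simp only [Set.mem_compl_iff, Set.mem_singleton_iff]
        intro hcon
        have h4 : x₀ + d * (1/(n+1)) = x₀ := Complex.ofReal_injective hcon
        have h3 : (0:ℝ) < d * (1/(n+1)) := by positivity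
        linarith
    apply hulim.frequently
    apply Filter.Frequently.of_forall
    intro n
    apply hzero_real
    · have h3 : (0:ℝ) < d * (1/(n+1)) := by positivity
      rw [hu]; simp only; linarith
    · have h3 : d * (1/(n+1)) ≤ d * 1 := by
        apply mul_le_mul_of_nonneg_left _ hdpos.le
        rw [div_le_one (by positivity)]
        linarith [Nat.cast_nonneg (α := ℝ) n]
      rw [hu]; simp only
      rw [hd] at h3 ⊢
      linarith
  have hHzero : Set.EqOn H 0 U :=
    hanal.eqOn_zero_of_preconnected_of_frequently_eq_zero hUconn hz₀U hfreq
  -- Fourier extraction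
  intro m₀
  set c' : ℤ → ℂ := fun m => c m * Real.exp (m * x₀) with hc'
  have hc'sum : Summable fun m => ‖c' m‖ := by
    have := hW x₀ hx₀1 hx₀2
    convert this using 2 with m
    rw [hc']
    simp only [norm_mul, Complex.norm_real, Real.norm_eq_abs, abs_of_pos (Real.exp_pos _)]
  have hg : ∀ y : ℝ, HasSum (fun m : ℤ => c' m * Complex.exp (m * y * I)) ((fun _ => (0:ℂ)) y) := by
    intro y
    set s : ℂ := (x₀:ℂ) + y * I with hs
    have hsU : s ∈ U := by
      simp only [hU, Set.mem_preimage, Set.mem_Ioo, hs]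
      constructor <;> simp [hx₀1, hx₀2]
    have h1 : HasSum (fun m : ℤ => c m * Complex.exp (m * s)) 0 := by
      rw [(hHsum s hsU).hasSum_iff]
      exact hHzero hsU
    convert h1 using 2 with m
    rw [hc', hs]
    rw [mul_assoc]
    congr 1
    rw [Complex.ofReal_exp, ← Complex.exp_add]
    congr 1
    push_cast
    ring
  have hkey := fourier_ext c' hc'sum (fun _ => 0) hg m₀
  simp only [zero_mul, intervalIntegral.integral_zero] at hkey
  have h2 : c' m₀ = 0 := by
    have hπ : ((2:ℂ) * Real.pi) ≠ 0 :=
      mul_ne_zero two_ne_zero (Complex.ofReal_ne_zero.mpr Real.pi_ne_zero)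
    exact (mul_eq_zero.mp hkey.symm).resolve_left hπ
  rw [hc'] at h2
  have h3 : ((Real.exp (m₀ * x₀) : ℝ):ℂ) ≠ 0 := by
    simp [Real.exp_ne_zero]
  exact (mul_eq_zero.mp h2).resolve_right h3


set_option maxHeartbeats 1000000 in
/-- If `φ'` and `ψ'` have Laurent expansions `∑ aₙ zⁿ`, `∑ b_m z^m` on the
annulus `{r < |z| < R}` and `z ↦ conj (ψ' z) * φ' z` is radial, then
`aₙ * conj (b_m) = 0` whenever `n ≠ m`. -/
theorem hankel_stmt2 (r R : ℝ) (hr : 0 < r) (hrR : r < R)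
    (a b : ℤ → ℂ) (φ' ψ' : ℂ → ℂ)
    (ha : ∀ z : ℂ, r < ‖z‖ → ‖z‖ < R →
      HasSum (fun n : ℤ => a n * z ^ n) (φ' z))
    (hb : ∀ z : ℂ, r < ‖z‖ → ‖z‖ < R →
      HasSum (fun m : ℤ => b m * z ^ m) (ψ' z))
    (hradial : ∀ z w : ℂ, r < ‖z‖ → ‖z‖ < R →
      r < ‖w‖ → ‖w‖ < R → ‖z‖ = ‖w‖ →
      (starRingEnd ℂ) (ψ' z) * φ' z = (starRingEnd ℂ) (ψ' w) * φ' w) :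
    ∀ n m : ℤ, n ≠ m → a n * (starRingEnd ℂ) (b m) = 0 := by
  intro n m hnm
  set k := n - m with hk
  have hk0 : k ≠ 0 := sub_ne_zero.mpr hnm
  have stepA : ∀ t : ℝ, r^2 < t → t < R^2 →
      HasSum (fun M : ℤ => (a (k + M) * (starRingEnd ℂ) (b M)) * (t:ℂ)^M) 0 := by
    intro t ht1 ht2
    have htpos : 0 < t := lt_trans (pow_pos hr 2) ht1
    set ρ := Real.sqrt t with hρ
    have hρpos : 0 < ρ := Real.sqrt_pos.mpr htpos
    have hρt : ρ^2 = t := Real.sq_sqrt htpos.le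
    have hρr : r < ρ := by
      nlinarith [Real.sq_sqrt htpos.le, Real.sqrt_nonneg t]
    have hρR : ρ < R := by
      nlinarith [Real.sq_sqrt htpos.le, Real.sqrt_nonneg t]
    have hρc0 : ((ρ:ℝ):ℂ) ≠ 0 := Complex.ofReal_ne_zero.mpr hρpos.ne'
    set z : ℝ → ℂ := fun y => (ρ:ℂ) * Complex.exp (y * I) with hz
    have habs : ∀ y : ℝ, ‖z y‖ = ρ := by
      intro y
      rw [hz]
      simp [map_mul, Complex.norm_exp_ofReal_mul_I, abs_of_pos hρpos]
    have hz1 : ∀ y, r < ‖z y‖ := fun y => (habs y).symm ▸ hρr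
    have hz2 : ∀ y, ‖z y‖ < R := fun y => (habs y).symm ▸ hρR
    -- conj of the z series
    have hψc : ∀ y : ℝ, HasSum (fun m' : ℤ => (starRingEnd ℂ) (b m') * ((starRingEnd ℂ) (z y))^m')
        ((starRingEnd ℂ) (ψ' (z y))) := by
      intro y
      have h1 := (hb (z y) (hz1 y) (hz2 y)).map (starRingEnd ℂ) continuous_conj
      convert h1 using 2 with m'
      simp [map_mul, map_zpow₀]
    have hφ : ∀ y : ℝ, HasSum (fun n' : ℤ => a n' * (z y)^n') (φ' (z y)) :=
      fun y => ha (z y) (hz1 y) (hz2 y)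
    -- product
    have hprod : ∀ y : ℝ, HasSum (fun p : ℤ × ℤ =>
        (a p.1 * (z y)^p.1) * ((starRingEnd ℂ) (b p.2) * ((starRingEnd ℂ) (z y))^p.2))
        (φ' (z y) * (starRingEnd ℂ) (ψ' (z y))) := by
      intro y
      have hs1 : Summable (fun n' : ℤ => ‖a n' * (z y)^n'‖) :=
        summable_norm_iff.mpr (hφ y).summable
      have hs2 : Summable (fun m' : ℤ => ‖(starRingEnd ℂ) (b m') * ((starRingEnd ℂ) (z y))^m'‖) :=
        summable_norm_iff.mpr (hψc y).summable
      have hs3 : Summable (fun p : ℤ × ℤ =>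
          (a p.1 * (z y)^p.1) * ((starRingEnd ℂ) (b p.2) * ((starRingEnd ℂ) (z y))^p.2)) :=
        summable_mul_of_summable_norm (f := fun n' : ℤ => a n' * (z y)^n')
          (g := fun m' : ℤ => (starRingEnd ℂ) (b m') * ((starRingEnd ℂ) (z y))^m') hs1 hs2
      exact HasSum.mul (f := fun n' : ℤ => a n' * (z y)^n')
        (g := fun m' : ℤ => (starRingEnd ℂ) (b m') * ((starRingEnd ℂ) (z y))^m')
        (hφ y) (hψc y) hs3
    -- rewrite the terms
    have hzpow : ∀ (j : ℤ) (y : ℝ), (z y)^j = (ρ:ℂ)^j * Complex.exp (j * (y * I)) := by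
      intro j y
      rw [hz]
      simp only
      rw [mul_zpow, ← Complex.exp_int_mul]
    have hconjz : ∀ y : ℝ, (starRingEnd ℂ) (z y) = (ρ:ℂ) * Complex.exp (-(y * I)) := by
      intro y
      rw [hz]
      simp only [map_mul, Complex.conj_ofReal, ← Complex.exp_conj]
      congr 2
      simp [Complex.ext_iff]
    have hczpow : ∀ (j : ℤ) (y : ℝ),
        ((starRingEnd ℂ) (z y))^j = (ρ:ℂ)^j * Complex.exp (-(j * (y * I))) := by
      intro j y
      rw [hconjz, mul_zpow, ← Complex.exp_int_mul]
      ring_nf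
    have hterm : ∀ (p : ℤ × ℤ) (y : ℝ),
        (a p.1 * (z y)^p.1) * ((starRingEnd ℂ) (b p.2) * ((starRingEnd ℂ) (z y))^p.2)
        = (a p.1 * (starRingEnd ℂ) (b p.2) * (ρ:ℂ)^(p.1 + p.2)) *
            Complex.exp (((p.1:ℂ) - p.2) * y * I) := by
      intro p y
      have e : Complex.exp ((p.1:ℂ) * (y * I)) * Complex.exp (-((p.2:ℂ) * (y * I)))
          = Complex.exp (((p.1:ℂ) - p.2) * y * I) := by
        rw [← Complex.exp_add]; congr 1; ring
      rw [hzpow, hczpow, zpow_add₀ hρc0, ← e]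
      ring
    have hprod2 : ∀ y : ℝ, HasSum (fun p : ℤ × ℤ =>
        (a p.1 * (starRingEnd ℂ) (b p.2) * (ρ:ℂ)^(p.1 + p.2)) *
          Complex.exp (((p.1:ℂ) - p.2) * y * I))
        (φ' (z y) * (starRingEnd ℂ) (ψ' (z y))) := by
      intro y
      have h1 := hprod y
      rwa [show (fun p : ℤ × ℤ =>
        (a p.1 * (z y)^p.1) * ((starRingEnd ℂ) (b p.2) * ((starRingEnd ℂ) (z y))^p.2)) =
        (fun p : ℤ × ℤ => (a p.1 * (starRingEnd ℂ) (b p.2) * (ρ:ℂ)^(p.1 + p.2)) *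
          Complex.exp (((p.1:ℂ) - p.2) * y * I)) from funext fun p => hterm p y] at h1
    -- reindex
    set σ : ℤ × ℤ ≃ ℤ × ℤ :=
      ⟨fun q => (q.1 + q.2, q.2), fun p => (p.1 - p.2, p.2),
        fun q => by simp, fun p => by simp⟩ with hσ
    have hmain : ∀ y : ℝ, HasSum (fun q : ℤ × ℤ =>
        (a (q.1 + q.2) * (starRingEnd ℂ) (b q.2) * (ρ:ℂ)^(q.1 + q.2 + q.2)) *
          Complex.exp ((q.1:ℂ) * y * I))
        (φ' (z y) * (starRingEnd ℂ) (ψ' (z y))) := by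
      intro y
      have h1 := (σ.hasSum_iff (f := fun p : ℤ × ℤ =>
        (a p.1 * (starRingEnd ℂ) (b p.2) * (ρ:ℂ)^(p.1 + p.2)) *
          Complex.exp (((p.1:ℂ) - p.2) * y * I))).mpr (hprod2 y)
      convert h1 using 2 with q
      rw [hσ]
      simp only [Equiv.coe_fn_mk, Function.comp_apply]
      congr 2
      push_cast
      ring
    -- inner summability
    have hinner : Summable (fun q : ℤ × ℤ =>
        a (q.1 + q.2) * (starRingEnd ℂ) (b q.2) * (ρ:ℂ)^(q.1 + q.2 + q.2)) := by
      have h1 := (hmain 0).summable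
      simpa using h1
    set A : ℤ → ℂ := fun K => ∑' M : ℤ,
      a (K + M) * (starRingEnd ℂ) (b M) * (ρ:ℂ)^(K + M + M) with hA
    have hfib : ∀ y : ℝ, HasSum (fun K : ℤ => A K * Complex.exp ((K:ℂ) * y * I))
        (φ' (z y) * (starRingEnd ℂ) (ψ' (z y))) := by
      intro y
      apply (hmain y).prod_fiberwise
      intro K
      exact ((hinner.prod_factor K).hasSum.mul_right _)
    -- norm summability of A
    have hnormsum : Summable (fun q : ℤ × ℤ =>
        ‖a (q.1 + q.2) * (starRingEnd ℂ) (b q.2) * (ρ:ℂ)^(q.1 + q.2 + q.2)‖) :=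
      summable_norm_iff.mpr hinner
    have hAnorm : Summable (fun K => ‖A K‖) := by
      have h2 : HasSum (fun K : ℤ => ∑' M : ℤ,
          ‖a (K + M) * (starRingEnd ℂ) (b M) * (ρ:ℂ)^(K + M + M)‖) (∑' q, ‖_‖) :=
        hnormsum.hasSum.prod_fiberwise (fun K => (hnormsum.prod_factor K).hasSum)
      apply Summable.of_nonneg_of_le (fun _ => norm_nonneg _)
        (fun K => norm_tsum_le_tsum_norm (hnormsum.prod_factor K))
      exact h2.summable
    -- radial: the sum is independent of y
    have hgconst : ∀ y : ℝ, φ' (z y) * (starRingEnd ℂ) (ψ' (z y))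
        = φ' (z 0) * (starRingEnd ℂ) (ψ' (z 0)) := by
      intro y
      have h1 := hradial (z y) (z 0) (hz1 y) (hz2 y) (hz1 0) (hz2 0)
        (by rw [habs, habs])
      rw [mul_comm (φ' (z y)), mul_comm (φ' (z 0))]
      exact h1
    -- Fourier coefficient k vanishes
    have hkey := fourier_ext A hAnorm
      (fun y => φ' (z y) * (starRingEnd ℂ) (ψ' (z y))) hfib k
    have hzero : ∫ y in (0:ℝ)..(2*Real.pi),
        (φ' (z y) * (starRingEnd ℂ) (ψ' (z y))) * Complex.exp (-((k:ℂ) * y * I)) = 0 := by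
      have hconst : ∀ y : ℝ, (φ' (z y) * (starRingEnd ℂ) (ψ' (z y)))
          * Complex.exp (-((k:ℂ) * y * I))
          = (φ' (z 0) * (starRingEnd ℂ) (ψ' (z 0))) * Complex.exp (((-k : ℤ):ℂ) * y * I) := by
        intro y
        rw [hgconst y]
        congr 2
        push_cast
        ring
      simp_rw [hconst]
      rw [intervalIntegral.integral_const_mul, integral_exp_int]
      simp [hk0]
    have hAk : A k = 0 := by
      rw [hzero] at hkey
      have hπ : ((2:ℂ) * Real.pi) ≠ 0 :=
        mul_ne_zero two_ne_zero (Complex.ofReal_ne_zero.mpr Real.pi_ne_zero)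
      exact (mul_eq_zero.mp hkey.symm).resolve_left hπ
    -- conclude the HasSum at t
    have hAksum : HasSum (fun M : ℤ =>
        a (k + M) * (starRingEnd ℂ) (b M) * (ρ:ℂ)^(k + M + M)) 0 := by
      rw [← hAk]
      exact (hinner.prod_factor k).hasSum
    have hrw : ∀ M : ℤ, a (k + M) * (starRingEnd ℂ) (b M) * (ρ:ℂ)^(k + M + M)
        = (ρ:ℂ)^k * ((a (k + M) * (starRingEnd ℂ) (b M)) * (t:ℂ)^M) := by
      intro M
      have h1 : ((ρ:ℝ):ℂ)^(k + M + M) = (ρ:ℂ)^k * ((t:ℂ))^M := by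
        rw [show k + M + M = k + 2 * M by ring, zpow_add₀ hρc0, zpow_mul]
        congr 2
        rw [show ((ρ:ℝ):ℂ)^(2:ℤ) = ((ρ^2 : ℝ):ℂ) from by rw [zpow_two]; push_cast; ring, hρt]
      rw [h1]
      ring
    have h2 : HasSum (fun M : ℤ =>
        (ρ:ℂ)^k * ((a (k + M) * (starRingEnd ℂ) (b M)) * (t:ℂ)^M)) ((ρ:ℂ)^k * 0) := by
      rw [mul_zero]
      rwa [show (fun M : ℤ => a (k + M) * (starRingEnd ℂ) (b M) * (ρ:ℂ)^(k + M + M))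
        = (fun M : ℤ => (ρ:ℂ)^k * ((a (k + M) * (starRingEnd ℂ) (b M)) * (t:ℂ)^M))
        from funext hrw] at hAksum
    exact (hasSum_mul_left_iff (zpow_ne_zero k hρc0)).mp h2
  have hr2 : (0:ℝ) < r^2 := pow_pos hr 2
  have hlt2 : r^2 < R^2 := by nlinarith
  have hfinal := laurent_zero (fun M => a (k + M) * (starRingEnd ℂ) (b M)) (r^2) (R^2)
    hr2 hlt2 stepA m
  simpa [hk] using hfinal
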